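/- (Equation (EqUWd), d-dimensional Ulam-Warburton) Let d >= 1. For the d-dimensional Ulam-Warburton cellular automaton on Z^d, the number u(n) of cells turned ON at stage n satisfies u(0) = 0, u(1) = 1, and, for every n >= 2, u(n) = 2*d * (2*d - 1)^(wt(n-1) - 1). -/

import Mathlib

/-- The binary weight of `n`: the number of 1s in the binary expansion of `n`. -/
def wt (n : ℕ) : ℕ := (Nat.digits 2 n).sum

/-- `q` is one of the `2d` neighbors of `p` in `ℤ^d`: it is obtained from `p`
by changing one coordinate by `+1` or `-1`. -/
def isNbr (d : ℕ) (p q : Fin d → ℤ) : Prop :=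
  ∃ i : Fin d, q = Function.update p i (p i + 1) ∨ q = Function.update p i (p i - 1)



namespace UW

variable {d : ℕ}

/-- a signed direction: axis and sign (true = +1) -/
abbrev Dir (d : ℕ) := Fin d × Bool

/-- reverse direction -/
def rv (c : Dir d) : Dir d := (c.1, !c.2)

@[simp] lemma rv_rv (c : Dir d) : rv (rv c) = c := by simp [rv]

lemma rv_eq_iff {c c' : Dir d} : rv c = c' ↔ c = rv c' := by
  constructor <;> rintro rfl <;> simp

/-- coordinate of the unit vector in direction c -/
def dz (c : Dir d) (i : Fin d) : ℤ := if i = c.1 then (if c.2 then 1 else -1) else 0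

lemma dz_self (c : Dir d) : dz c c.1 = if c.2 then 1 else -1 := by simp [dz]

lemma dz_ne (c : Dir d) {i : Fin d} (h : i ≠ c.1) : dz c i = 0 := by simp [dz, h]

lemma abs_dz_self (c : Dir d) : |dz c c.1| = 1 := by
  rcases c with ⟨i, b⟩; cases b <;> simp [dz]

lemma abs_dz (c : Dir d) (i : Fin d) : |dz c i| = if i = c.1 then 1 else 0 := by
  by_cases h : i = c.1
  · subst h; simp [abs_dz_self]
  · simp [dz_ne c h, h]

lemma dz_rv (c : Dir d) (i : Fin d) : dz (rv c) i = - dz c i := by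
  rcases c with ⟨j, b⟩; cases b <;> simp [dz, rv] <;> split <;> simp

lemma dz_inj {c c' : Dir d} (h : ∀ i, dz c i = dz c' i) : c = c' := by
  rcases c with ⟨i, b⟩; rcases c' with ⟨i', b'⟩
  have h1 := h i
  by_cases hii : i = i'
  · subst hii
    simp only [dz, if_pos rfl] at h1
    cases b <;> cases b' <;> simp_all
  · exfalso
    simp only [dz, if_pos rfl, if_neg hii] at h1
    cases b <;> simp_all

/-- entry : power and direction -/
abbrev E (d : ℕ) := ℕ × Dir d

/-- point of a list of entries -/
def pt (L : List (E d)) : Fin d → ℤ := fun i => (L.map fun e => (2 ^ e.1 : ℤ) * dz e.2 i).sum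

/-- mass of a list of entries -/
def ms (L : List (E d)) : ℕ := (L.map fun e => 2 ^ e.1).sum

@[simp] lemma pt_nil (i : Fin d) : pt ([] : List (E d)) i = 0 := rfl

@[simp] lemma ms_nil : ms ([] : List (E d)) = 0 := rfl

lemma pt_cons (e : E d) (L : List (E d)) (i : Fin d) :
    pt (e :: L) i = (2 ^ e.1 : ℤ) * dz e.2 i + pt L i := by simp [pt]

lemma ms_cons (e : E d) (L : List (E d)) : ms (e :: L) = 2 ^ e.1 + ms L := by simp [ms]

lemma pt_append (L M : List (E d)) (i : Fin d) : pt (L ++ M) i = pt L i + pt M i := by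
  simp [pt]

lemma ms_append (L M : List (E d)) : ms (L ++ M) = ms L + ms M := by simp [ms]

lemma pt_reverse (L : List (E d)) (i : Fin d) : pt L.reverse i = pt L i := by
  simp [pt, List.sum_reverse, List.map_reverse]

lemma ms_reverse (L : List (E d)) : ms L.reverse = ms L := by
  simp [ms, List.sum_reverse, List.map_reverse]

/-- the ℓ¹ norm (into ℤ) -/
def nrm (p : Fin d → ℤ) : ℤ := ∑ i, |p i|

lemma nrm_nonneg (p : Fin d → ℤ) : 0 ≤ nrm p := Finset.sum_nonneg fun i _ => abs_nonneg _

lemma abs_le_nrm (p : Fin d → ℤ) (i : Fin d) : |p i| ≤ nrm p :=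
  Finset.single_le_sum (fun j _ => abs_nonneg (p j)) (Finset.mem_univ i)

lemma nrm_single (c : Dir d) (z : ℤ) : nrm (fun i => z * dz c i) = |z| := by
  unfold nrm
  rw [Finset.sum_eq_single c.1]
  · simp [abs_mul, abs_dz_self]
  · intro j _ hj; simp [abs_mul, dz_ne c hj]
  · intro h; exact absurd (Finset.mem_univ _) h

lemma nrm_le_ms (L : List (E d)) : nrm (pt L) ≤ (ms L : ℤ) := by
  induction L with
  | nil => simp [nrm]
  | cons e L ih =>
    have htri : nrm (pt (e :: L)) ≤ nrm (fun i => (2 ^ e.1 : ℤ) * dz e.2 i) + nrm (pt L) := by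
      unfold nrm
      rw [← Finset.sum_add_distrib]
      apply Finset.sum_le_sum
      intro i _
      rw [pt_cons]
      exact abs_add_le _ _
    have h1 : nrm (fun i => (2 ^ e.1 : ℤ) * dz e.2 i) = 2 ^ e.1 := by
      rw [nrm_single]; simp [abs_of_nonneg]
    calc nrm (pt (e :: L)) ≤ 2 ^ e.1 + nrm (pt L) := by rw [← h1]; exact htri
    _ ≤ 2 ^ e.1 + (ms L : ℤ) := by linarith
    _ = (ms (e :: L) : ℤ) := by rw [ms_cons]; push_cast; ring

/-- per-axis mass -/
def axm (L : List (E d)) (i : Fin d) : ℕ :=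
  ((L.filter fun e => e.2.1 = i).map fun e => 2 ^ e.1).sum

lemma axm_nil (i : Fin d) : axm ([] : List (E d)) i = 0 := rfl

lemma axm_cons (e : E d) (L : List (E d)) (i : Fin d) :
    axm (e :: L) i = (if e.2.1 = i then 2 ^ e.1 else 0) + axm L i := by
  by_cases h : e.2.1 = i <;> simp [axm, List.filter_cons, h]

lemma abs_pt_le_axm (L : List (E d)) (i : Fin d) : |pt L i| ≤ (axm L i : ℤ) := by
  induction L with
  | nil => simp
  | cons e L ih =>
    rw [pt_cons, axm_cons]
    calc |(2 ^ e.1 : ℤ) * dz e.2 i + pt L i| ≤ |(2 ^ e.1 : ℤ) * dz e.2 i| + |pt L i| := abs_add_le _ _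
    _ ≤ (if e.2.1 = i then (2:ℤ) ^ e.1 else 0) + (axm L i : ℤ) := by
        apply add_le_add _ ih
        rw [abs_mul, abs_dz]
        by_cases h : i = e.2.1
        · subst h; simp
        · simp [h, Ne.symm h]
    _ ≤ _ := by push_cast; split <;> simp

lemma axm_le_ms (L : List (E d)) (i : Fin d) : axm L i ≤ ms L := by
  induction L with
  | nil => simp [axm_nil]
  | cons e L ih =>
    rw [axm_cons, ms_cons]
    have := ih
    have hc : 0 < 2 ^ e.1 := Nat.pow_pos (by norm_num)
    split <;> omega

lemma axm_add_axm_le_ms (L : List (E d)) {i j : Fin d} (h : i ≠ j) :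
    axm L i + axm L j ≤ ms L := by
  induction L with
  | nil => simp [axm_nil]
  | cons e L ih =>
    rw [axm_cons, axm_cons, ms_cons]
    by_cases h1 : e.2.1 = i
    · have h2 : ¬ e.2.1 = j := by rw [h1]; exact h
      have hc : 0 < 2 ^ e.1 := Nat.pow_pos (by norm_num)
      simp only [if_pos h1, if_neg h2]; omega
    · have hc : 0 < 2 ^ e.1 := Nat.pow_pos (by norm_num)
      simp only [if_neg h1]; split <;> omega

/-- chain condition for descending valid lists -/
def C (e f : E d) : Prop := f.1 < e.1 ∧ f.2 ≠ rv e.2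

/-- validity of a (descending) representation -/
def Ok (L : List (E d)) : Prop := L.IsChain (C (d := d))

lemma ok_nil : Ok ([] : List (E d)) := List.isChain_nil

lemma ok_singleton (e : E d) : Ok [e] := List.isChain_singleton e

lemma ok_tail {e : E d} {L : List (E d)} (h : Ok (e :: L)) : Ok L := h.tail

lemma ok_cons_cons {e f : E d} {L : List (E d)} :
    Ok (e :: f :: L) ↔ C e f ∧ Ok (f :: L) := List.isChain_cons_cons

lemma powers_lt {k : ℕ} {c : Dir d} {R : List (E d)} (h : Ok ((k, c) :: R)) :
    ∀ f ∈ R, f.1 < k := by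
  induction R generalizing k c with
  | nil => intro f hf; simp at hf
  | cons e R ih =>
    intro f hf
    have h1 : C (k, c) e ∧ Ok (e :: R) := ok_cons_cons.mp h
    rcases List.mem_cons.mp hf with hf | hf
    · subst hf
      exact h1.1.1
    · exact lt_trans (ih h1.2 f hf) h1.1.1

lemma ms_lt_pow {R : List (E d)} {K : ℕ} (hok : Ok R) (h : ∀ f ∈ R, f.1 < K) :
    ms R < 2 ^ K := by
  induction R generalizing K with
  | nil => simp [Nat.pow_pos (by norm_num : 0 < 2)]
  | cons e R ih =>
    rw [ms_cons]
    have he : e.1 < K := h e (by simp)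
    have hR : ms R < 2 ^ e.1 := by
      rcases e with ⟨k2, c2⟩
      exact ih (ok_tail hok) (powers_lt hok)
    have : (2:ℕ) ^ (e.1 + 1) ≤ 2 ^ K := Nat.pow_le_pow_right (by norm_num) he
    have h2 : (2:ℕ) ^ (e.1+1) = 2^e.1 + 2^e.1 := by ring
    omega

lemma ms_tail_lt {k : ℕ} {c : Dir d} {R : List (E d)} (h : Ok ((k, c) :: R)) :
    ms R < 2 ^ k := ms_lt_pow (ok_tail h) (powers_lt h)

/-- the sign of a direction -/
def sg (c : Dir d) : ℤ := if c.2 then 1 else -1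

lemma sg_mul_self (c : Dir d) : sg c * sg c = 1 := by unfold sg; split <;> norm_num

lemma abs_sg (c : Dir d) : |sg c| = 1 := by unfold sg; split <;> norm_num

lemma dz_eq_sg (c : Dir d) : dz c c.1 = sg c := by simp [dz, sg]

lemma pt_cons_self (k : ℕ) (c : Dir d) (R : List (E d)) :
    pt ((k, c) :: R) c.1 = 2 ^ k * sg c + pt R c.1 := by
  rw [pt_cons]; simp [dz_eq_sg]

lemma pt_cons_ne (k : ℕ) (c : Dir d) (R : List (E d)) {j : Fin d} (hj : j ≠ c.1) :
    pt ((k, c) :: R) j = pt R j := by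
  rw [pt_cons, dz_ne c hj]; ring

lemma sg_mul_head (k : ℕ) (c : Dir d) (R : List (E d)) :
    sg c * pt ((k, c) :: R) c.1 = 2 ^ k + sg c * pt R c.1 := by
  rw [pt_cons_self]
  rcases c with ⟨a, b⟩
  cases b <;> simp [sg] <;> ring

/-- head-sign lower bound (needs only the tail mass bound) -/
lemma dom_sgn {k : ℕ} {c : Dir d} {R : List (E d)} (hms : ms R < 2 ^ k) :
    (2:ℤ) ^ k - ms R ≤ sg c * pt ((k, c) :: R) c.1 := by
  rw [sg_mul_head]
  have h1 : |pt R c.1| ≤ (ms R : ℤ) := le_trans (abs_le_nrm _ _) (nrm_le_ms R)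
  have h2 : - (ms R : ℤ) ≤ sg c * pt R c.1 := by
    have := neg_abs_le (sg c * pt R c.1)
    rw [abs_mul, abs_sg, one_mul] at this
    linarith
  linarith

lemma dom_pos {k : ℕ} {c : Dir d} {R : List (E d)} (hms : ms R < 2 ^ k) :
    0 < sg c * pt ((k, c) :: R) c.1 := by
  have := dom_sgn (c := c) hms
  have h2 : (ms R : ℤ) < 2 ^ k := by exact_mod_cast hms
  linarith

lemma abs_head_ge {k : ℕ} {c : Dir d} {R : List (E d)} (hms : ms R < 2 ^ k) :
    (2:ℤ) ^ k - |pt R c.1| ≤ |pt ((k, c) :: R) c.1| := by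
  have habs : sg c * pt ((k, c) :: R) c.1 ≤ |pt ((k, c) :: R) c.1| := by
    have := le_abs_self (sg c * pt ((k, c) :: R) c.1)
    rwa [abs_mul, abs_sg, one_mul] at this
  rw [sg_mul_head] at habs
  have h2 : - |pt R c.1| ≤ sg c * pt R c.1 := by
    have := neg_abs_le (sg c * pt R c.1)
    rw [abs_mul, abs_sg, one_mul] at this
    linarith
  linarith

lemma two_abs_le_nrm (p : Fin d → ℤ) {i j : Fin d} (h : i ≠ j) :
    |p i| + |p j| ≤ nrm p := by
  unfold nrm
  rw [← Finset.add_sum_erase _ _ (Finset.mem_univ i)]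
  have hj : j ∈ Finset.univ.erase i := Finset.mem_erase.mpr ⟨Ne.symm h, Finset.mem_univ j⟩
  have := Finset.single_le_sum (f := fun t => |p t|) (fun t _ => abs_nonneg (p t)) hj
  linarith

lemma sum_erase_eq (p q : Fin d → ℤ) (a : Fin d) (h : ∀ j ≠ a, p j = q j) :
    ∑ i ∈ Finset.univ.erase a, |p i| = ∑ i ∈ Finset.univ.erase a, |q i| := by
  apply Finset.sum_congr rfl
  intro j hj
  rw [h j (Finset.mem_erase.mp hj).1]

lemma nrm_split (p : Fin d → ℤ) (a : Fin d) :
    nrm p = |p a| + ∑ i ∈ Finset.univ.erase a, |p i| := by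
  unfold nrm
  rw [← Finset.add_sum_erase _ _ (Finset.mem_univ a)]

/-- strict dominance of head axis -/
lemma dom_strict {k : ℕ} {c : Dir d} {R : List (E d)} (hms : ms R < 2 ^ k) :
    ∑ i ∈ Finset.univ.erase c.1, |pt ((k, c) :: R) i| < |pt ((k, c) :: R) c.1| := by
  have he : ∑ i ∈ Finset.univ.erase c.1, |pt ((k, c) :: R) i|
      = ∑ i ∈ Finset.univ.erase c.1, |pt R i| :=
    sum_erase_eq _ _ _ fun j hj => pt_cons_ne k c R hj
  have h1 : |pt R c.1| + ∑ i ∈ Finset.univ.erase c.1, |pt R i| ≤ (ms R : ℤ) := by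
    rw [← nrm_split]; exact nrm_le_ms R
  have h2 := abs_head_ge (c := c) hms
  have h3 : (ms R : ℤ) < 2 ^ k := by exact_mod_cast hms
  rw [he]; linarith

/-- key norm lower bound for valid lists -/
lemma nrm_ge {k : ℕ} {c : Dir d} {R : List (E d)} (h : Ok ((k, c) :: R)) :
    (2:ℤ) ^ k ≤ nrm (pt ((k, c) :: R)) := by
  induction R generalizing k c with
  | nil =>
    have : nrm (pt [(k, c)]) = 2 ^ k := by
      have : pt [(k, c)] = fun i => (2 ^ k : ℤ) * dz c i := by
        funext i; rw [pt_cons]; simp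
      rw [this, nrm_single]
      simp [abs_of_nonneg]
    rw [this]
  | cons e R2 ih =>
    rcases e with ⟨k2, c2⟩
    have hcc : C (k, c) (k2, c2) ∧ Ok ((k2, c2) :: R2) := ok_cons_cons.mp h
    have hms : ms ((k2, c2) :: R2) < 2 ^ k := ms_tail_lt h
    have hms2 : ms R2 < 2 ^ k2 := ms_tail_lt hcc.2
    set r := pt ((k2, c2) :: R2) with hr
    by_cases hax : c2.1 = c.1
    · -- same axis: same sign
      have hsg : c2.2 = c.2 := by
        have := hcc.1.2
        rcases c with ⟨a, b⟩; rcases c2 with ⟨a2, b2⟩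
        simp only [rv] at this
        simp only at hax
        subst hax
        cases b <;> cases b2 <;> simp_all
      have hsgeq : sg c2 = sg c := by unfold sg; rw [hsg]
      have hpos : 0 < sg c * r c.1 := by
        rw [← hsgeq, ← hax]; exact dom_pos hms2
      have : (2:ℤ) ^ k + sg c * r c.1 ≤ sg c * pt ((k, c) :: (k2, c2) :: R2) c.1 := by
        rw [sg_mul_head]
      have habs : sg c * pt ((k, c) :: (k2, c2) :: R2) c.1
          ≤ |pt ((k, c) :: (k2, c2) :: R2) c.1| := by
        have := le_abs_self (sg c * pt ((k, c) :: (k2, c2) :: R2) c.1)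
        rwa [abs_mul, abs_sg, one_mul] at this
      have hle := abs_le_nrm (pt ((k, c) :: (k2, c2) :: R2)) c.1
      linarith
    · -- different axis
      have h1 : (2:ℤ) ^ k - |r c.1| ≤ |pt ((k, c) :: (k2, c2) :: R2) c.1| :=
        abs_head_ge hms
      have h2 : |pt ((k, c) :: (k2, c2) :: R2) c2.1| = |r c2.1| := by
        rw [pt_cons_ne k c _ (by exact hax)]
      -- dominance on tail: |r c2.1| > |r c.1|
      have hdom := dom_strict (c := c2) hms2
      have hmem : c.1 ∈ Finset.univ.erase c2.1 :=
        Finset.mem_erase.mpr ⟨fun hh => hax hh.symm, Finset.mem_univ _⟩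
      have h3 : |r c.1| ≤ ∑ i ∈ Finset.univ.erase c2.1, |r i| := by
        exact Finset.single_le_sum (f := fun t => |r t|) (fun t _ => abs_nonneg (r t)) hmem
      have h4 : |r c.1| < |r c2.1| := lt_of_le_of_lt h3 hdom
      have h5 := two_abs_le_nrm (pt ((k, c) :: (k2, c2) :: R2))
        (i := c.1) (j := c2.1) (fun hh => hax hh.symm)
      linarith

lemma no_rep_lt {k k' : ℕ} {c c' : Dir d} {R R' : List (E d)}
    (hL : Ok ((k, c) :: R)) (hL' : Ok ((k', c') :: R'))
    (hpt : pt ((k, c) :: R) = pt ((k', c') :: R')) (hkk : k' < k) : False := by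
  have h1 : (2:ℤ) ^ k ≤ nrm (pt ((k, c) :: R)) := nrm_ge hL
  have h2 : nrm (pt ((k', c') :: R')) ≤ (ms ((k', c') :: R') : ℤ) := nrm_le_ms _
  have h3 : ms ((k', c') :: R') < 2 ^ k := by
    rw [ms_cons]
    show 2 ^ k' + ms R' < 2 ^ k
    have ht := ms_tail_lt hL'
    have h4 : (2:ℕ) ^ (k' + 1) ≤ 2 ^ k := Nat.pow_le_pow_right (by norm_num) hkk
    have h5 : (2:ℕ) ^ (k' + 1) = 2 ^ k' + 2 ^ k' := by ring
    omega
  have h6 : (ms ((k', c') :: R') : ℤ) < (2:ℤ) ^ k := by exact_mod_cast h3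
  rw [hpt] at h1
  linarith

/-- uniqueness: a point has at most one valid representation -/
theorem pt_inj {L L' : List (E d)} (hL : Ok L) (hL' : Ok L') (h : pt L = pt L') :
    L = L' := by
  induction L generalizing L' with
  | nil =>
    rcases L' with _ | ⟨⟨k', c'⟩, R'⟩
    · rfl
    · exfalso
      have h1 := nrm_ge hL'
      have h2 : nrm (pt ((k', c') :: R')) = 0 := by
        rw [← h]; simp [nrm]
      have : (0:ℤ) < 2 ^ k' := by positivity
      linarith
  | cons e R ih =>
    rcases e with ⟨k, c⟩
    rcases L' with _ | ⟨⟨k', c'⟩, R'⟩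
    · exfalso
      have h1 := nrm_ge hL
      have h2 : nrm (pt ((k, c) :: R)) = 0 := by
        rw [h]; simp [nrm]
      have : (0:ℤ) < 2 ^ k := by positivity
      linarith
    · -- powers equal
      have hkk : k = k' := by
        rcases lt_trichotomy k k' with hlt | heq | hlt
        · exact absurd h.symm (fun hh => no_rep_lt hL' hL hh hlt)
        · exact heq
        · exact absurd h (fun hh => no_rep_lt hL hL' hh hlt)
      subst hkk
      -- axes equal
      have hax : c.1 = c'.1 := by
        by_contra hne
        have hd1 := dom_strict (c := c) (ms_tail_lt hL)
        have hd2 := dom_strict (c := c') (ms_tail_lt hL')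
        rw [← h] at hd2
        have hm1 : c'.1 ∈ Finset.univ.erase c.1 :=
          Finset.mem_erase.mpr ⟨Ne.symm hne, Finset.mem_univ _⟩
        have hm2 : c.1 ∈ Finset.univ.erase c'.1 :=
          Finset.mem_erase.mpr ⟨hne, Finset.mem_univ _⟩
        have h1 : |pt ((k,c)::R) c'.1| ≤ ∑ i ∈ Finset.univ.erase c.1, |pt ((k,c)::R) i| :=
          Finset.single_le_sum (f := fun t => |pt ((k,c)::R) t|)
            (fun t _ => abs_nonneg _) hm1
        have h2 : |pt ((k,c)::R) c.1| ≤ ∑ i ∈ Finset.univ.erase c'.1, |pt ((k,c)::R) i| :=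
          Finset.single_le_sum (f := fun t => |pt ((k,c)::R) t|)
            (fun t _ => abs_nonneg _) hm2
        linarith
      -- signs equal
      have hsg : c = c' := by
        have hp1 := dom_pos (c := c) (ms_tail_lt hL)
        have hp2 := dom_pos (c := c') (ms_tail_lt hL')
        rw [← h, ← hax] at hp2
        rcases c with ⟨a, b⟩; rcases c' with ⟨a', b'⟩
        simp only at hax
        subst hax
        have hbb : b = b' := by
          by_contra hbb
          have : sg (a, b) = - sg (a, b') := by
            unfold sg; cases b <;> cases b' <;> simp_all
          rw [this] at hp1
          linarith
        rw [hbb]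
      subst hsg
      -- tails
      have htail : pt R = pt R' := by
        funext i
        have := congrFun h i
        rw [pt_cons, pt_cons] at this
        linarith
      rw [ih (ok_tail hL) (ok_tail hL') htail]

/-- norm is strictly bigger than 2^k when the tail is nonempty -/
lemma nrm_gt {k : ℕ} {c : Dir d} {f : E d} {R2 : List (E d)}
    (h : Ok ((k, c) :: f :: R2)) :
    (2:ℤ) ^ k + 1 ≤ nrm (pt ((k, c) :: f :: R2)) := by
  rcases f with ⟨k2, c2⟩
  have hcc : C (k, c) (k2, c2) ∧ Ok ((k2, c2) :: R2) := ok_cons_cons.mp h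
  have hms2 : ms R2 < 2 ^ k2 := ms_tail_lt hcc.2
  set r := pt ((k2, c2) :: R2) with hr
  by_cases hax : c2.1 = c.1
  · have hsg : c2.2 = c.2 := by
      have := hcc.1.2
      rcases c with ⟨a, b⟩; rcases c2 with ⟨a2, b2⟩
      simp only [rv] at this
      simp only at hax
      subst hax
      cases b <;> cases b2 <;> simp_all
    have hsgeq : sg c2 = sg c := by unfold sg; rw [hsg]
    have hpos : 0 < sg c * r c.1 := by
      rw [← hsgeq, ← hax]; exact dom_pos hms2
    have h0 : (2:ℤ) ^ k + sg c * r c.1 ≤ sg c * pt ((k, c) :: (k2, c2) :: R2) c.1 := by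
      rw [sg_mul_head]
    have habs : sg c * pt ((k, c) :: (k2, c2) :: R2) c.1
        ≤ |pt ((k, c) :: (k2, c2) :: R2) c.1| := by
      have := le_abs_self (sg c * pt ((k, c) :: (k2, c2) :: R2) c.1)
      rwa [abs_mul, abs_sg, one_mul] at this
    have hle := abs_le_nrm (pt ((k, c) :: (k2, c2) :: R2)) c.1
    linarith
  · have h1 : (2:ℤ) ^ k - |r c.1| ≤ |pt ((k, c) :: (k2, c2) :: R2) c.1| :=
      abs_head_ge (ms_tail_lt h)
    have h2 : |pt ((k, c) :: (k2, c2) :: R2) c2.1| = |r c2.1| := by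
      rw [pt_cons_ne k c _ (by exact hax)]
    have hdom := dom_strict (c := c2) hms2
    have hmem : c.1 ∈ Finset.univ.erase c2.1 :=
      Finset.mem_erase.mpr ⟨fun hh => hax hh.symm, Finset.mem_univ _⟩
    have h3 : |r c.1| ≤ ∑ i ∈ Finset.univ.erase c2.1, |r i| :=
      Finset.single_le_sum (f := fun t => |r t|) (fun t _ => abs_nonneg (r t)) hmem
    have h4 : |r c.1| < |r c2.1| := lt_of_le_of_lt h3 hdom
    have h5 := two_abs_le_nrm (pt ((k, c) :: (k2, c2) :: R2))
      (i := c.1) (j := c2.1) (fun hh => hax hh.symm)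
    linarith

/-- norm = 2^k forces a singleton representation -/
lemma single_of_nrm_eq {k : ℕ} {c : Dir d} {R : List (E d)}
    (h : Ok ((k, c) :: R)) (hn : nrm (pt ((k, c) :: R)) = 2 ^ k) : R = [] := by
  rcases R with _ | ⟨f, R2⟩
  · rfl
  · exfalso
    have := nrm_gt h
    rw [hn] at this
    linarith

lemma sum_abs_dz (σ : Dir d) : ∑ i, |dz σ i| = 1 := by
  have := nrm_single σ (1 : ℤ)
  unfold nrm at this
  simp only [one_mul] at this
  rw [this]
  norm_num

lemma nrm_nbr_ge {p q : Fin d → ℤ} {σ : Dir d} (h : ∀ i, q i = p i - dz σ i) :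
    nrm p - 1 ≤ nrm q := by
  have : nrm p ≤ nrm q + 1 := by
    unfold nrm
    rw [← sum_abs_dz σ, ← Finset.sum_add_distrib]
    apply Finset.sum_le_sum
    intro i _
    have := h i
    have h1 := abs_add_le (q i) (dz σ i)
    have h2 : p i = q i + dz σ i := by rw [this]; ring
    rw [h2]
    exact h1
  linarith

/-- P2: a representable neighbor of smaller mass is the parent. -/
theorem P2 {L M : List (E d)} {σ : Dir d}
    (hL : Ok L) (hM : Ok M) (hLne : L ≠ [])
    (hpt : ∀ i, pt M i = pt L i - dz σ i) (hms : ms M < ms L) :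
    ∃ e, L.getLast? = some e ∧ (∀ i, pt M i = pt L i - dz e.2 i) ∧ ms M + 1 = ms L := by
  induction L generalizing M with
  | nil => exact absurd rfl hLne
  | cons hd R ih =>
    rcases hd with ⟨k, c⟩
    rcases M with _ | ⟨⟨k', c'⟩, R'⟩
    · -- M = [] : L must be singleton [(0,c)] and σ acts as c
      have hptL : ∀ i, pt ((k, c) :: R) i = dz σ i := by
        intro i
        have := hpt i
        simp only [pt_nil] at this
        linarith
      have hnrm : nrm (pt ((k, c) :: R)) = 1 := by
        unfold nrm
        rw [← sum_abs_dz σ]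
        apply Finset.sum_congr rfl
        intro i _
        rw [hptL i]
      have hk0 : k = 0 := by
        have h1 := nrm_ge hL
        rw [hnrm] at h1
        by_contra hk
        have : (2:ℤ) ^ 1 ≤ 2 ^ k := by
          apply pow_le_pow_right₀ (by norm_num)
          omega
        norm_num at this
        linarith
      subst hk0
      have hR : R = [] := by
        have := powers_lt hL
        rcases R with _ | ⟨f, _⟩
        · rfl
        · exact absurd (this f (by simp)) (by omega)
      subst hR
      refine ⟨(0, c), by simp, ?_, by simp [ms_cons]⟩
      intro i
      simp only [pt_nil, pt_cons]
      ring_nf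
    · -- M = (k',c') :: R'
      by_cases hkk : k' = k
      · subst hkk
        by_cases hcc : c' = c
        · subst hcc
          -- strip equal heads, recurse
          have hRne : R ≠ [] := by
            intro hR
            subst hR
            have h1 : ms ((k', c') :: R') = 2 ^ k' + ms R' := ms_cons _ _
            have h2 : ms [(k', c')] = 2 ^ k' + 0 := by simp [ms_cons]
            omega
          have hptt : ∀ i, pt R' i = pt R i - dz σ i := by
            intro i
            have := hpt i
            rw [pt_cons, pt_cons] at this
            linarith
          have hmst : ms R' < ms R := by
            rw [ms_cons, ms_cons] at hms
            omega
          obtain ⟨e, he1, he2, he3⟩ := ih (ok_tail hL) (ok_tail hM) hRne hptt hmst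
          refine ⟨e, ?_, ?_, ?_⟩
          · rcases R with _ | ⟨f, R2⟩
            · exact absurd rfl hRne
            · rw [List.getLast?_cons_cons]
              exact he1
          · intro i
            rw [pt_cons, pt_cons, he2 i]
            ring
          · rw [ms_cons, ms_cons]
            omega
        · -- same power, different dir : impossible
          exfalso
          set p := pt ((k', c) :: R) with hp
          set q := pt ((k', c') :: R') with hq
          by_cases hax : c'.1 = c.1
          · -- same axis, opposite sign
            have hb : c'.2 ≠ c.2 := by
              intro hb
              apply hcc
              rcases c with ⟨a, b⟩; rcases c' with ⟨a', b'⟩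
              simp only at hax hb
              rw [hax, hb]
            have hsg : sg c' = - sg c := by
              unfold sg
              rcases c with ⟨a, b⟩; rcases c' with ⟨a', b'⟩
              simp only at hb
              cases b <;> cases b' <;> simp_all
            have hp1 : 0 < sg c * p c.1 := dom_pos (ms_tail_lt hL)
            have hp2 : 0 < sg c' * q c'.1 := dom_pos (ms_tail_lt hM)
            rw [hsg, hax] at hp2
            have hd : |p c.1 - q c.1| ≤ 1 := by
              have := hpt c.1
              have h2 : p c.1 - q c.1 = dz σ c.1 := by rw [this]; ring
              rw [h2, abs_dz]
              split <;> norm_num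
            have ha1 : 1 ≤ sg c * p c.1 := hp1
            have ha2 : sg c * q c.1 ≤ -1 := by nlinarith [sg_mul_self c]
            have habs : |sg c| = 1 := abs_sg c
            have : (2:ℤ) ≤ |sg c * (p c.1 - q c.1)| := by
              rw [mul_sub]
              rw [abs_of_nonneg (by linarith)]
              linarith
            rw [abs_mul, habs, one_mul] at this
            linarith
          · -- different axes : tight mass chain
            set a := c.1
            set b := c'.1
            have hab : a ≠ b := fun hh => hax hh.symm
            -- |q a| ≤ axm R' a
            have h1 : |q a| ≤ (axm R' a : ℤ) := by
              have : q a = pt R' a := by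
                rw [hq, pt_cons, dz_ne c' (fun hh => hax hh.symm)]
                ring
              rw [this]
              exact abs_pt_le_axm R' a
            -- |p a| ≥ 2^k' - axm R a
            have h2 : (2:ℤ) ^ k' - (axm R a : ℤ) ≤ |p a| := by
              have := abs_head_ge (c := c) (R := R) (ms_tail_lt hL)
              have h3 := abs_pt_le_axm R a
              rw [← hp] at this
              linarith
            -- |p a - q a| ≤ 1
            have hd : ∀ i, |p i - q i| ≤ 1 := by
              intro i
              have := hpt i
              have h2 : p i - q i = dz σ i := by rw [this]; ring
              rw [h2, abs_dz]
              split <;> norm_num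
            have h3 : |p b| ≤ (axm R b : ℤ) := by
              have : p b = pt R b := by
                rw [hp, pt_cons, dz_ne c hax]
                ring
              rw [this]
              exact abs_pt_le_axm R b
            have h4 : (2:ℤ) ^ k' - (axm R' b : ℤ) ≤ |q b| := by
              have := abs_head_ge (c := c') (R := R') (ms_tail_lt hM)
              have h5 := abs_pt_le_axm R' b
              rw [← hq] at this
              linarith
            have e1 : (axm R' a : ℤ) + axm R a ≥ 2 ^ k' - 1 := by
              have := hd a
              have habs := abs_sub_abs_le_abs_sub (p a) (q a)
              have : |p a| - |q a| ≤ 1 := le_trans habs (hd a)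
              linarith
            have e2 : (axm R b : ℤ) + axm R' b ≥ 2 ^ k' - 1 := by
              have habs := abs_sub_abs_le_abs_sub (q b) (p b)
              have h6 : |q b - p b| ≤ 1 := by
                have := hd b
                rw [← abs_neg]
                simpa [neg_sub] using this
              have : |q b| - |p b| ≤ 1 := le_trans habs h6
              linarith
            have e3 : axm R a + axm R b ≤ ms R := axm_add_axm_le_ms R hab
            have e4 : axm R' a + axm R' b ≤ ms R' := axm_add_axm_le_ms R' hab
            have e5 : ms R < 2 ^ k' := ms_tail_lt hL
            have e6 : ms R' < 2 ^ k' := ms_tail_lt hM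
            -- combine: ms R = ms R' = 2^k' - 1 forced, contradicting hms
            have e7 : ms ((k', c) :: R) = 2 ^ k' + ms R := ms_cons _ _
            have e8 : ms ((k', c') :: R') = 2 ^ k' + ms R' := ms_cons _ _
            have c3 : ((axm R a : ℤ) + axm R b) ≤ (ms R : ℤ) := by exact_mod_cast e3
            have c4 : ((axm R' a : ℤ) + axm R' b) ≤ (ms R' : ℤ) := by exact_mod_cast e4
            have c5 : (ms R : ℤ) < 2 ^ k' := by exact_mod_cast e5
            have c6 : (ms R' : ℤ) < 2 ^ k' := by exact_mod_cast e6
            have cms : (ms ((k', c') :: R') : ℤ) < (ms ((k', c) :: R) : ℤ) := by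
              exact_mod_cast hms
            rw [e7, e8] at cms
            push_cast at cms
            linarith
      · -- k' ≠ k
        rcases Nat.lt_or_ge k k' with hlt | hge
        · -- k' > k : mass too small for the norm
          exfalso
          have h1 : (2:ℤ) ^ k' ≤ nrm (pt ((k', c') :: R')) := nrm_ge hM
          have h2 : nrm (pt ((k', c') :: R')) ≤ (ms ((k', c') :: R') : ℤ) := nrm_le_ms _
          have h3 : ms ((k', c') :: R') < ms ((k, c) :: R) := hms
          have h4 : ms ((k, c) :: R) < 2 ^ (k + 1) := by
            rw [ms_cons]
            show 2 ^ k + ms R < 2 ^ (k + 1)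
            have := ms_tail_lt hL
            have h5 : (2:ℕ) ^ (k + 1) = 2 ^ k + 2 ^ k := by ring
            omega
          have h6 : (2:ℕ) ^ (k + 1) ≤ 2 ^ k' := Nat.pow_le_pow_right (by norm_num) hlt
          have h7 : (ms ((k', c') :: R') : ℤ) < (2:ℤ) ^ k' := by
            have : ms ((k', c') :: R') < 2 ^ k' := by omega
            exact_mod_cast this
          linarith
        · -- k' < k : tight case, L is a singleton
          have hlt : k' < k := by omega
          set p := pt ((k, c) :: R) with hp
          set q := pt ((k', c') :: R') with hq
          have h1 : nrm q ≤ (ms ((k', c') :: R') : ℤ) := nrm_le_ms _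
          have h2 : ms ((k', c') :: R') < 2 ^ (k' + 1) := by
            rw [ms_cons]
            show 2 ^ k' + ms R' < 2 ^ (k' + 1)
            have := ms_tail_lt hM
            have h3 : (2:ℕ) ^ (k' + 1) = 2 ^ k' + 2 ^ k' := by ring
            omega
          have h4 : (2:ℕ) ^ (k' + 1) ≤ 2 ^ k := Nat.pow_le_pow_right (by norm_num) hlt
          have h5 : nrm q < (2:ℤ) ^ k := by
            have : ms ((k', c') :: R') < 2 ^ k := by omega
            have hc : (ms ((k', c') :: R') : ℤ) < (2:ℤ) ^ k := by exact_mod_cast this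
            linarith
          have h6 : nrm p - 1 ≤ nrm q := nrm_nbr_ge hpt
          have h7 : (2:ℤ) ^ k ≤ nrm p := nrm_ge hL
          have h8 : nrm p = 2 ^ k := by linarith
          have hR : R = [] := single_of_nrm_eq hL h8
          subst hR
          -- now L = [(k,c)]; p = 2^k * dz c
          have hqn : nrm q = 2 ^ k - 1 := by
            -- q = p - dz σ ; show σ = c and q has norm 2^k - 1
            -- first: ms M ≥ nrm q and ms M ≤ 2^k - 1 ; also nrm q ≥ 2^k - 1
            linarith
          -- σ must equal c
          have hσ : σ = c := by
            by_cases hax : σ.1 = c.1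
            · -- same axis
              have hqa : q c.1 = 2 ^ k * sg c - dz σ c.1 := by
                have := hpt c.1
                rw [hp, pt_cons_self] at this
                simp only [pt_nil] at this
                linarith
              have hqd : dz σ c.1 = sg σ := by rw [← hax, dz_eq_sg]
              by_cases hb : σ.2 = c.2
              · rcases σ with ⟨i, bb⟩; rcases c with ⟨j, b2⟩
                simp only at hax hb
                rw [hax, hb]
              · exfalso
                have hsg : sg σ = - sg c := by
                  unfold sg
                  rcases σ with ⟨i, bb⟩; rcases c with ⟨j, b2⟩
                  simp only at hb
                  cases bb <;> cases b2 <;> simp_all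
                rw [hqd, hsg] at hqa
                have : |q c.1| = 2 ^ k + 1 := by
                  rw [hqa]
                  have h9 : 2 ^ k * sg c - - sg c = sg c * (2 ^ k + 1) := by ring
                  rw [h9, abs_mul, abs_sg, one_mul]
                  rw [abs_of_nonneg (by positivity)]
                have h10 := abs_le_nrm q c.1
                rw [this] at h10
                linarith
            · exfalso
              -- different axis: norm of q is 2^k + 1
              have hq1 : q σ.1 = - dz σ σ.1 := by
                have := hpt σ.1
                rw [hp, pt_cons_ne k c [] (by exact hax)] at this
                simp only [pt_nil] at this
                linarith
              have hq2 : q c.1 = 2 ^ k * sg c := by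
                have := hpt c.1
                rw [hp, pt_cons_self] at this
                simp only [pt_nil] at this
                rw [this, dz_ne σ (fun hh => hax hh.symm)]
                ring
              have ha1 : |q σ.1| = 1 := by
                rw [hq1, abs_neg, abs_dz]
                simp
              have ha2 : |q c.1| = 2 ^ k := by
                rw [hq2, abs_mul, abs_sg, mul_one]
                rw [abs_of_nonneg (by positivity)]
              have := two_abs_le_nrm q (i := σ.1) (j := c.1) hax
              rw [ha1, ha2] at this
              linarith
          refine ⟨(k, c), by simp, ?_, ?_⟩
          · intro i
            have := hpt i
            rw [hσ] at this
            exact this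
          · -- masses : ms M = 2^k - 1
            have hml : ms [(k, c)] = 2 ^ k := by simp [ms_cons]
            have hmq : (ms ((k', c') :: R') : ℤ) = 2 ^ k - 1 := by
              have h9 : (2:ℤ) ^ k - 1 ≤ nrm q := by linarith
              have h10 : nrm q ≤ (ms ((k', c') :: R') : ℤ) := h1
              have h11 : (ms ((k', c') :: R') : ℤ) < 2 ^ k := by
                have : ms ((k', c') :: R') < 2 ^ k := by omega
                exact_mod_cast this
              linarith
            have : (ms ((k', c') :: R') : ℤ) + 1 = 2 ^ k := by linarith
            have h12 : ms ((k', c') :: R') + 1 = 2 ^ k := by exact_mod_cast this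
            omega

end UW


namespace UW

variable {d : ℕ}

/-- ascending chain condition -/
def CA (e f : E d) : Prop := e.1 < f.1 ∧ e.2 ≠ rv f.2

/-- ascending validity -/
def OkA (L : List (E d)) : Prop := L.IsChain (CA (d := d))

lemma okA_iff_ok_reverse {L : List (E d)} : OkA L ↔ Ok L.reverse := by
  unfold OkA Ok
  rw [List.isChain_reverse]
  constructor <;> intro h <;> (apply List.IsChain.imp _ h; intro a b hab; exact ⟨hab.1, hab.2⟩)

lemma ok_iff_okA_reverse {L : List (E d)} : Ok L ↔ OkA L.reverse := by
  rw [okA_iff_ok_reverse, List.reverse_reverse]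

lemma okA_nil : OkA ([] : List (E d)) := List.isChain_nil

lemma okA_tail {e : E d} {L : List (E d)} (h : OkA (e :: L)) : OkA L := h.tail

lemma okA_cons_cons {e f : E d} {L : List (E d)} :
    OkA (e :: f :: L) ↔ CA e f ∧ OkA (f :: L) := List.isChain_cons_cons

lemma okA_cons' {e : E d} {L : List (E d)} :
    OkA (e :: L) ↔ (∀ h ∈ L.head?, CA e h) ∧ OkA L := List.isChain_cons

lemma powers_gt {k : ℕ} {c : Dir d} {T : List (E d)} (h : OkA ((k, c) :: T)) :
    ∀ f ∈ T, k < f.1 := by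
  induction T generalizing k c with
  | nil => intro f hf; simp at hf
  | cons e T ih =>
    intro f hf
    have h1 : CA (k, c) e ∧ OkA (e :: T) := okA_cons_cons.mp h
    rcases List.mem_cons.mp hf with hf2 | hf2
    · subst hf2; exact h1.1.1
    · rcases e with ⟨k2, c2⟩
      have h3 := ih h1.2
      exact lt_trans h1.1.1 (h3 f hf2)

lemma ne_rv_self (c : Dir d) : c ≠ rv c := by
  rcases c with ⟨a, b⟩
  intro h
  have := congrArg Prod.snd h
  simp [rv] at this

/-- a run of consecutive powers in a single direction -/
def run (lo n : ℕ) (c : Dir d) : List (E d) :=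
  match n with
  | 0 => []
  | n + 1 => (lo, c) :: run (lo + 1) n c

@[simp] lemma run_zero (lo : ℕ) (c : Dir d) : run lo 0 c = [] := rfl

lemma run_succ (lo n : ℕ) (c : Dir d) : run lo (n + 1) c = (lo, c) :: run (lo + 1) n c := rfl

lemma pt_run (lo n : ℕ) (c : Dir d) (i : Fin d) :
    pt (run lo n c) i = ((2:ℤ) ^ (lo + n) - 2 ^ lo) * dz c i := by
  induction n generalizing lo with
  | zero => simp
  | succ n ih =>
    rw [run_succ, pt_cons, ih (lo + 1)]
    have : (lo + 1) + n = lo + (n + 1) := by omega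
    rw [this]
    ring_nf

lemma ms_run (lo n : ℕ) (c : Dir d) : ms (run lo n c) + 2 ^ lo = 2 ^ (lo + n) := by
  induction n generalizing lo with
  | zero => simp
  | succ n ih =>
    rw [run_succ, ms_cons]
    show 2 ^ lo + ms (run (lo+1) n c) + 2 ^ lo = 2 ^ (lo + (n+1))
    have h := ih (lo + 1)
    have h2 : (lo + 1) + n = lo + (n + 1) := by omega
    rw [h2] at h
    omega

lemma head?_run (lo n : ℕ) (c : Dir d) (hn : 0 < n) :
    (run lo n c).head? = some (lo, c) := by
  rcases n with _ | n
  · omega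
  · rfl

lemma getLast?_run (lo n : ℕ) (c : Dir d) (hn : 0 < n) :
    (run lo n c).getLast? = some (lo + n - 1, c) := by
  induction n generalizing lo with
  | zero => omega
  | succ n ih =>
    rw [run_succ]
    rcases Nat.eq_zero_or_pos n with hn0 | hn0
    · subst hn0; simp
    · rcases n with _ | n
      · omega
      · rw [run_succ, List.getLast?_cons_cons, ← run_succ, ih (lo + 1) hn0]
        have : lo + 1 + (n + 1) - 1 = lo + (n + 1 + 1) - 1 := by omega
        rw [this]

lemma okA_run (lo n : ℕ) (c : Dir d) : OkA (run lo n c) := by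
  induction n generalizing lo with
  | zero => exact okA_nil
  | succ n ih =>
    rw [run_succ, okA_cons']
    refine ⟨?_, ih (lo + 1)⟩
    intro h hh
    rcases n with _ | n
    · simp [run_zero] at hh
    · rw [head?_run _ _ _ (by omega)] at hh
      have hh2 : h = (lo + 1, c) := by
        injection hh with hh
        exact hh.symm
      subst hh2
      exact ⟨by omega, ne_rv_self c⟩

lemma okA_append {A B : List (E d)} (hA : OkA A) (hB : OkA B)
    (hAB : ∀ a ∈ A.getLast?, ∀ b ∈ B.head?, CA a b) : OkA (A ++ B) :=
  List.isChain_append.mpr ⟨hA, hB, hAB⟩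

/-- parent construction (ascending): replace smallest entry (k,c) by the full lower run -/
lemma parent_ok {k : ℕ} {c : Dir d} {T : List (E d)} (h : OkA ((k, c) :: T)) :
    OkA (run 0 k c ++ T) := by
  apply okA_append (okA_run 0 k c) (okA_tail h)
  intro a ha b hb
  rcases Nat.eq_zero_or_pos k with hk | hk
  · subst hk; simp at ha
  · rw [getLast?_run _ _ _ hk] at ha
    injection ha with ha
    subst ha
    have h2 := (okA_cons'.mp h).1 b hb
    have h3 := h2.1
    exact ⟨by omega, h2.2⟩

lemma parent_pt {k : ℕ} {c : Dir d} {T : List (E d)} (i : Fin d) :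
    pt (run 0 k c ++ T) i = pt ((k, c) :: T) i - dz c i := by
  rw [pt_append, pt_run, pt_cons]
  simp only [Nat.zero_add, pow_zero]
  ring

lemma parent_ms {k : ℕ} {c : Dir d} {T : List (E d)} :
    ms (run 0 k c ++ T) + 1 = ms ((k, c) :: T) := by
  rw [ms_append, ms_cons]
  show ms (run 0 k c) + ms T + 1 = 2 ^ k + ms T
  have := ms_run 0 k c
  simp only [Nat.zero_add, pow_zero] at this
  omega

end UW


namespace UW

variable {d : ℕ}

lemma okA_singleton (e : E d) : OkA [e] := List.isChain_singleton e

lemma rv_of_same_axis {c σ : Dir d} (hax : c.1 = σ.1) (hb : σ.2 ≠ c.2) : σ = rv c := by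
  rcases c with ⟨a, b⟩; rcases σ with ⟨a', b'⟩
  simp only at hax hb
  subst hax
  cases b <;> cases b' <;> simp_all [rv]

lemma eq_of_same_axis {c σ : Dir d} (hax : c.1 = σ.1) (hb : σ.2 = c.2) : σ = c := by
  rcases c with ⟨a, b⟩; rcases σ with ⟨a', b'⟩
  simp only at hax hb
  subst hax; subst hb; rfl

lemma ne_rv_of_ax {x y : Dir d} (h : x.1 ≠ y.1) : x ≠ rv y :=
  fun hh => h (by rw [hh]; rfl)

lemma ne_of_ax {x y : Dir d} (h : x.1 ≠ y.1) : x ≠ y :=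
  fun hh => h (by rw [hh])

/-- The carry lemma: adding 2^j in direction c to a valid configuration with all
powers ≥ j either yields a representable point, or a point one of whose *other*
neighbors is representable with controlled mass. -/
theorem INC (W : List (E d)) (j : ℕ) (c : Dir d) (hW : OkA W) (hj : ∀ e ∈ W, j ≤ e.1) :
    (∃ N, OkA N ∧ ∀ i, pt N i = pt W i + 2 ^ j * dz c i)
    ∨ (∃ τ N₂, τ.1 ≠ c.1 ∧ OkA N₂ ∧ (∀ i, pt N₂ i = pt W i + 2 ^ j * dz c i - dz τ i)
        ∧ ms N₂ + 1 ≤ ms W + 2 ^ j) := by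
  induction W generalizing j with
  | nil =>
    left
    refine ⟨[(j, c)], okA_singleton _, fun i => ?_⟩
    rw [pt_cons]; simp
  | cons e W₄ ih =>
    rcases e with ⟨k₄, c₄⟩
    have hk₄ : j ≤ k₄ := hj (k₄, c₄) (by simp)
    rcases Nat.lt_or_ge j k₄ with hgt | hge
    · -- j < k₄
      by_cases hc : c = rv c₄
      · -- opposite direction: absorb
        left
        refine ⟨run j (k₄ - j) c₄ ++ W₄, ?_, ?_⟩
        · apply okA_append (okA_run _ _ _) (okA_tail hW)
          intro a ha b hb
          rw [getLast?_run _ _ _ (by omega)] at ha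
          have ha2 : a = (j + (k₄ - j) - 1, c₄) := by injection ha with h; exact h.symm
          subst ha2
          have h2 := (okA_cons'.mp hW).1 b hb
          have h3 := h2.1
          exact ⟨by omega, h2.2⟩
        · intro i
          rw [pt_append, pt_run, pt_cons]
          have he : j + (k₄ - j) = k₄ := by omega
          rw [he]
          have hdz : dz c i = - dz c₄ i := by rw [hc, dz_rv]
          rw [hdz]
          ring
      · -- can simply prepend (j, c)
        left
        refine ⟨(j, c) :: (k₄, c₄) :: W₄, ?_, ?_⟩
        · rw [okA_cons_cons]
          exact ⟨⟨hgt, hc⟩, hW⟩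
        · intro i
          rw [pt_cons]
          ring
    · -- k₄ = j
      have hkj : k₄ = j := by omega
      subst hkj
      by_cases hcc : c₄ = c
      · -- same direction: carry
        subst hcc
        have htail : ∀ e ∈ W₄, (k₄ + 1) ≤ e.1 := fun e he => powers_gt hW e he
        rcases ih (k₄ + 1) (okA_tail hW) htail with ⟨N, hN, hpt⟩ | ⟨τ, N₂, hτ, hN₂, hpt, hms⟩
        · left
          refine ⟨N, hN, fun i => ?_⟩
          rw [hpt i, pt_cons]
          ring
        · right
          refine ⟨τ, N₂, hτ, hN₂, fun i => ?_, ?_⟩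
          · rw [hpt i, pt_cons]
            ring
          · rw [ms_cons]
            show ms N₂ + 1 ≤ 2 ^ k₄ + ms W₄ + 2 ^ k₄
            have : (2:ℕ) ^ (k₄ + 1) = 2 ^ k₄ + 2 ^ k₄ := by ring
            omega
      · by_cases hrv : c₄ = rv c
        · -- cancellation
          left
          refine ⟨W₄, okA_tail hW, fun i => ?_⟩
          rw [pt_cons]
          have hdz : dz c₄ i = - dz c i := by rw [hrv, dz_rv]
          rw [hdz]
          ring
        · -- collision: different axes
          have hax : c₄.1 ≠ c.1 := by
            intro h
            by_cases hb : c.2 = c₄.2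
            · exact hcc (eq_of_same_axis h.symm hb.symm)
            · exact hrv (rv_of_same_axis h.symm (fun hh => hb hh.symm))
          right
          rcases W₄ with _ | ⟨⟨k₅, c₅⟩, W₅⟩
          · -- W₄ = []
            refine ⟨c₄, run 0 k₄ c₄ ++ [(k₄, c)], hax, ?_, ?_, ?_⟩
            · apply okA_append (okA_run _ _ _) (okA_singleton _)
              intro a ha b hb
              rcases Nat.eq_zero_or_pos k₄ with h0 | h0
              · subst h0; simp at ha
              · rw [getLast?_run _ _ _ h0] at ha
                have ha2 : a = (0 + k₄ - 1, c₄) := by injection ha with h; exact h.symm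
                subst ha2
                simp only [List.head?_cons, Option.mem_some_iff] at hb
                subst hb
                exact ⟨by omega, ne_rv_of_ax hax⟩
            · intro i
              rw [pt_append, pt_run, pt_cons, pt_cons]
              simp only [Nat.zero_add, pow_zero, pt_nil]
              ring
            · rw [ms_append, ms_cons, ms_cons]
              have := ms_run 0 k₄ c₄
              simp only [Nat.zero_add, pow_zero] at this
              show ms (run 0 k₄ c₄) + (2 ^ k₄ + ms ([] : List (E d))) + 1 ≤ 2 ^ k₄ + ms ([] : List (E d)) + 2 ^ k₄
              simp only [ms_nil]
              omega
          · by_cases hc₅ : c = rv c₅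
            · -- the next entry reverses c: deep merge
              have hk₅ : k₄ < k₅ := (okA_cons_cons.mp hW).1.1
              refine ⟨c₄, run 0 k₄ c₄ ++ (run k₄ (k₅ - k₄) c₅ ++ W₅), hax, ?_, ?_, ?_⟩
              · apply okA_append (okA_run _ _ _)
                · apply okA_append (okA_run _ _ _) (okA_tail (okA_tail hW))
                  intro a ha b hb
                  rw [getLast?_run _ _ _ (by omega)] at ha
                  have ha2 : a = (k₄ + (k₅ - k₄) - 1, c₅) := by injection ha with h; exact h.symm
                  subst ha2
                  have h2 := (okA_cons'.mp (okA_tail hW)).1 b hb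
                  have h3 := h2.1
                  exact ⟨by omega, h2.2⟩
                · intro a ha b hb
                  rcases Nat.eq_zero_or_pos k₄ with h0 | h0
                  · subst h0; simp at ha
                  · rw [getLast?_run _ _ _ h0] at ha
                    have ha2 : a = (0 + k₄ - 1, c₄) := by injection ha with h; exact h.symm
                    subst ha2
                    have hhd : (run k₄ (k₅ - k₄) c₅ ++ W₅).head? = some (k₄, c₅) := by
                      have : run k₄ (k₅ - k₄) c₅ = (k₄, c₅) :: run (k₄ + 1) (k₅ - k₄ - 1) c₅ := by
                        have hn : k₅ - k₄ = (k₅ - k₄ - 1) + 1 := by omega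
                        rw [hn, run_succ]
                        norm_num
                      rw [this]
                      rfl
                    rw [hhd] at hb
                    simp only [Option.mem_some_iff] at hb
                    subst hb
                    refine ⟨by omega, ?_⟩
                    rw [hc₅.symm]
                    exact ne_of_ax hax
              · intro i
                rw [pt_append, pt_append, pt_run, pt_run, pt_cons, pt_cons]
                have he : k₄ + (k₅ - k₄) = k₅ := by omega
                rw [he]
                have hdz : dz c i = - dz c₅ i := by rw [hc₅, dz_rv]
                rw [hdz]
                simp only [Nat.zero_add, pow_zero]
                ring
              · rw [ms_append, ms_append, ms_cons, ms_cons]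
                have h1 := ms_run 0 k₄ c₄
                simp only [Nat.zero_add, pow_zero] at h1
                have h2 := ms_run k₄ (k₅ - k₄) c₅
                have he : k₄ + (k₅ - k₄) = k₅ := by omega
                rw [he] at h2
                show ms (run 0 k₄ c₄) + (ms (run k₄ (k₅ - k₄) c₅) + ms W₅) + 1
                    ≤ 2 ^ k₄ + (2 ^ k₅ + ms W₅) + 2 ^ k₄
                omega
            · -- can prepend (k₄, c) before (k₅, c₅)
              have hk₅ : k₄ < k₅ := (okA_cons_cons.mp hW).1.1
              refine ⟨c₄, run 0 k₄ c₄ ++ ((k₄, c) :: (k₅, c₅) :: W₅), hax, ?_, ?_, ?_⟩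
              · apply okA_append (okA_run _ _ _)
                · rw [okA_cons_cons]
                  exact ⟨⟨hk₅, hc₅⟩, okA_tail hW⟩
                · intro a ha b hb
                  rcases Nat.eq_zero_or_pos k₄ with h0 | h0
                  · subst h0; simp at ha
                  · rw [getLast?_run _ _ _ h0] at ha
                    have ha2 : a = (0 + k₄ - 1, c₄) := by injection ha with h; exact h.symm
                    subst ha2
                    simp only [List.head?_cons, Option.mem_some_iff] at hb
                    subst hb
                    exact ⟨by omega, ne_rv_of_ax hax⟩
              · intro i
                simp only [pt_append, pt_run, pt_cons]
                simp only [Nat.zero_add, pow_zero]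
                ring
              · rw [ms_append, ms_cons, ms_cons, ms_cons]
                have h1 := ms_run 0 k₄ c₄
                simp only [Nat.zero_add, pow_zero] at h1
                show ms (run 0 k₄ c₄) + (2 ^ k₄ + (2 ^ k₅ + ms W₅)) + 1
                    ≤ 2 ^ k₄ + (2 ^ k₅ + ms W₅) + 2 ^ k₄
                omega

/-- ADD: adding a unit step to a representable point either yields a representable
point, or a point having a second representable neighbor of mass ≤ the original. -/
theorem ADD {M : List (E d)} (σ : Dir d) (hM : OkA M) :
    (∃ N, OkA N ∧ ∀ i, pt N i = pt M i + dz σ i)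
    ∨ (∃ τ N₂, τ.1 ≠ σ.1 ∧ OkA N₂ ∧ (∀ i, pt N₂ i = pt M i + dz σ i - dz τ i)
        ∧ ms N₂ ≤ ms M) := by
  rcases M with _ | ⟨⟨k, c⟩, M''⟩
  · left
    refine ⟨[(0, σ)], okA_singleton _, fun i => ?_⟩
    rw [pt_cons]; simp
  · by_cases hax : c.1 = σ.1
    · by_cases hb : σ.2 = c.2
      · -- σ = c
        have hσ : σ = c := eq_of_same_axis hax hb
        subst hσ
        rcases Nat.eq_zero_or_pos k with hk | hk
        · -- k = 0 : carry
          subst hk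
          have htail : ∀ e ∈ M'', 1 ≤ e.1 := fun e he => powers_gt hM e he
          rcases INC M'' 1 σ (okA_tail hM) htail with ⟨N, hN, hpt⟩ | ⟨τ, N₂, hτ, hN₂, hpt, hms⟩
          · left
            refine ⟨N, hN, fun i => ?_⟩
            rw [hpt i, pt_cons]
            ring
          · right
            refine ⟨τ, N₂, hτ, hN₂, fun i => ?_, ?_⟩
            · rw [hpt i, pt_cons]
              ring
            · rw [ms_cons]
              simp only [pow_zero, pow_one] at hms ⊢
              omega
        · -- k ≥ 1 : prepend (0, σ)
          left
          refine ⟨(0, σ) :: (k, σ) :: M'', ?_, ?_⟩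
          · rw [okA_cons_cons]
            exact ⟨⟨hk, ne_rv_self σ⟩, hM⟩
          · intro i
            rw [pt_cons]
            simp only [pow_zero]
            ring
      · -- σ = rv c : parent
        have hσ : σ = rv c := rv_of_same_axis hax hb
        left
        refine ⟨run 0 k c ++ M'', parent_ok hM, fun i => ?_⟩
        rw [parent_pt, hσ, dz_rv]
        ring
    · -- different axis
      rcases Nat.eq_zero_or_pos k with hk | hk
      · -- k = 0
        subst hk
        rcases M'' with _ | ⟨⟨k₃, c₃⟩, M₃⟩
        · -- M = [(0,c)]
          right
          refine ⟨c, [(0, σ)], hax, okA_singleton _, fun i => ?_, ?_⟩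
          · simp only [pt_cons, pt_nil]
            simp only [pow_zero]
            ring
          · simp [ms_cons]
        · by_cases hσ₃ : σ = rv c₃
          · -- deep: absorb into the reversal
            right
            have hk₃ : 0 < k₃ := (okA_cons_cons.mp hM).1.1
            refine ⟨c, run 0 k₃ c₃ ++ M₃, hax, parent_ok (okA_tail hM),
              fun i => ?_, ?_⟩
            · rw [parent_pt]
              simp only [pt_cons, pow_zero]
              have hdz : dz σ i = - dz c₃ i := by rw [hσ₃, dz_rv]
              rw [hdz]
              ring
            · have hp := parent_ms (k := k₃) (c := c₃) (T := M₃)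
              simp only [ms_cons, pow_zero] at hp ⊢
              omega
          · -- prepend (0, σ) to M''
            right
            have hk₃ : 0 < k₃ := (okA_cons_cons.mp hM).1.1
            refine ⟨c, (0, σ) :: (k₃, c₃) :: M₃, hax, ?_, fun i => ?_, ?_⟩
            · rw [okA_cons_cons]
              exact ⟨⟨hk₃, hσ₃⟩, okA_tail hM⟩
            · simp only [pt_cons, pow_zero]
              ring
            · simp [ms_cons]
      · -- k ≥ 1 : prepend (0, σ)
        left
        refine ⟨(0, σ) :: (k, c) :: M'', ?_, ?_⟩
        · rw [okA_cons_cons]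
          exact ⟨⟨hk, ne_rv_of_ax (fun h => hax h.symm)⟩, hM⟩
        · intro i
          rw [pt_cons]
          simp only [pow_zero]
          ring

end UW


namespace UW

/-- binary weight via digit sum (same as the theorem's wt) -/
def wtt (n : ℕ) : ℕ := (Nat.digits 2 n).sum

lemma wtt_zero : wtt 0 = 0 := by simp [wtt]

lemma wtt_rec {n : ℕ} (h : n ≠ 0) : wtt n = n % 2 + wtt (n / 2) := by
  unfold wtt
  rw [Nat.digits_def' (by norm_num : 1 < 2) (Nat.pos_of_ne_zero h)]
  simp

lemma wtt_pow_add : ∀ k r, r < 2 ^ k → wtt (2 ^ k + r) = wtt r + 1 := by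
  intro k
  induction k with
  | zero =>
    intro r hr
    have : r = 0 := by omega
    subst this
    rw [wtt_rec (by norm_num)]
    simp [wtt_zero]
  | succ k ih =>
    intro r hr
    have h2 : (2:ℕ) ^ (k + 1) = 2 ^ k * 2 := by ring
    have hm : 2 ^ (k + 1) + r ≠ 0 := by positivity
    rw [wtt_rec hm]
    have hmod : (2 ^ (k + 1) + r) % 2 = r % 2 := by omega
    have hdiv : (2 ^ (k + 1) + r) / 2 = 2 ^ k + r / 2 := by omega
    rw [hmod, hdiv]
    have hr2 : r / 2 < 2 ^ k := by omega
    rw [ih (r / 2) hr2]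
    rcases Nat.eq_zero_or_pos r with h0 | h0
    · subst h0; simp [wtt_zero]
    · have hwr : wtt r = r % 2 + wtt (r / 2) := wtt_rec (by omega)
      omega

/-- power sum of a list of exponents -/
def plsum (ks : List ℕ) : ℕ := (ks.map (2 ^ ·)).sum

@[simp] lemma plsum_nil : plsum [] = 0 := rfl

lemma plsum_cons (k : ℕ) (ks : List ℕ) : plsum (k :: ks) = 2 ^ k + plsum ks := by
  simp [plsum]

lemma plchain_lt {ks : List ℕ} {k : ℕ} (h : List.IsChain (· > ·) (k :: ks)) :
    ∀ j ∈ ks, j < k := by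
  induction ks generalizing k with
  | nil => intro j hj; simp at hj
  | cons a ks ih =>
    intro j hj
    have h1 := List.isChain_cons_cons.mp h
    rcases List.mem_cons.mp hj with hj2 | hj2
    · subst hj2; exact h1.1
    · exact lt_trans (ih h1.2 j hj2) h1.1

lemma plsum_lt {ks : List ℕ} {K : ℕ} (hc : List.IsChain (· > ·) ks)
    (h : ∀ j ∈ ks, j < K) : plsum ks < 2 ^ K := by
  induction ks generalizing K with
  | nil => simp [Nat.pow_pos (by norm_num : 0 < 2)]
  | cons k ks ih =>
    rw [plsum_cons]
    have hk : k < K := h k (by simp)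
    have hR : plsum ks < 2 ^ k := ih hc.tail (plchain_lt hc)
    have h2 : (2:ℕ) ^ (k + 1) ≤ 2 ^ K := Nat.pow_le_pow_right (by norm_num) hk
    have h3 : (2:ℕ) ^ (k + 1) = 2 ^ k + 2 ^ k := by ring
    omega

/-- uniqueness of strictly decreasing binary expansions -/
lemma binU : ∀ ks ks' : List ℕ, List.IsChain (· > ·) ks → List.IsChain (· > ·) ks' →
    plsum ks = plsum ks' → ks = ks' := by
  intro ks
  induction ks with
  | nil =>
    intro ks' _ _ h
    rcases ks' with _ | ⟨k', ks'⟩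
    · rfl
    · exfalso
      rw [plsum_nil, plsum_cons] at h
      have : (0:ℕ) < 2 ^ k' := Nat.pow_pos (by norm_num)
      omega
  | cons k ks ih =>
    intro ks' hc hc' h
    rcases ks' with _ | ⟨k', ks''⟩
    · exfalso
      rw [plsum_nil, plsum_cons] at h
      have : (0:ℕ) < 2 ^ k := Nat.pow_pos (by norm_num)
      omega
    · have hkk : k = k' := by
        by_contra hne
        rcases Nat.lt_or_ge k k' with hlt | hge
        · have h1 : plsum (k :: ks) < 2 ^ (k + 1) := by
            apply plsum_lt hc
            intro j hj
            rcases List.mem_cons.mp hj with hj2 | hj2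
            · omega
            · have := plchain_lt hc j hj2; omega
          have h2 : (2:ℕ) ^ (k + 1) ≤ 2 ^ k' := Nat.pow_le_pow_right (by norm_num) hlt
          have h4 : 2 ^ k' ≤ plsum (k' :: ks'') := by
            rw [plsum_cons]; omega
          omega
        · have hlt : k' < k := by omega
          have h1 : plsum (k' :: ks'') < 2 ^ (k' + 1) := by
            apply plsum_lt hc'
            intro j hj
            rcases List.mem_cons.mp hj with hj2 | hj2
            · omega
            · have := plchain_lt hc' j hj2; omega
          have h2 : (2:ℕ) ^ (k' + 1) ≤ 2 ^ k := Nat.pow_le_pow_right (by norm_num) hlt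
          have h4 : 2 ^ k ≤ plsum (k :: ks) := by
            rw [plsum_cons]; omega
          omega
      subst hkk
      rw [plsum_cons, plsum_cons] at h
      rw [ih ks'' hc.tail hc'.tail (by omega)]

/-- descending list of binary digit positions -/
def bitsD (m : ℕ) : List ℕ :=
  if h : m = 0 then [] else Nat.log 2 m :: bitsD (m - 2 ^ Nat.log 2 m)
decreasing_by
  have h1 : 0 < 2 ^ Nat.log 2 m := Nat.pow_pos (by norm_num)
  omega

lemma bitsD_zero : bitsD 0 = [] := by rw [bitsD]; simp

lemma bitsD_pos {m : ℕ} (h : m ≠ 0) :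
    bitsD m = Nat.log 2 m :: bitsD (m - 2 ^ Nat.log 2 m) := by
  conv_lhs => rw [bitsD]
  simp [h]

lemma log2_le {m : ℕ} (h : m ≠ 0) : 2 ^ Nat.log 2 m ≤ m :=
  Nat.pow_log_le_self 2 h

lemma log2_lt (m : ℕ) : m < 2 ^ (Nat.log 2 m + 1) :=
  Nat.lt_pow_succ_log_self (by norm_num) m

lemma bitsD_sum : ∀ m, plsum (bitsD m) = m := by
  intro m
  induction m using Nat.strong_induction_on with
  | _ m ih =>
    rcases Nat.eq_zero_or_pos m with h0 | h0
    · subst h0; rw [bitsD_zero]; rfl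
    · rw [bitsD_pos (by omega), plsum_cons]
      have hle := log2_le (m := m) (by omega)
      have hlt : m - 2 ^ Nat.log 2 m < m := by
        have : 0 < 2 ^ Nat.log 2 m := Nat.pow_pos (by norm_num)
        omega
      rw [ih _ hlt]
      omega

lemma bitsD_chain : ∀ m, List.IsChain (· > ·) (bitsD m) := by
  intro m
  induction m using Nat.strong_induction_on with
  | _ m ih =>
    rcases Nat.eq_zero_or_pos m with h0 | h0
    · subst h0; rw [bitsD_zero]; exact List.isChain_nil
    · rw [bitsD_pos (by omega)]
      have hle := log2_le (m := m) (by omega)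
      have hlt2 := log2_lt m
      have hpos : 0 < 2 ^ Nat.log 2 m := Nat.pow_pos (by norm_num)
      have hpk : (2:ℕ) ^ (Nat.log 2 m + 1) = 2 ^ Nat.log 2 m + 2 ^ Nat.log 2 m := by ring
      have hrk : m - 2 ^ Nat.log 2 m < 2 ^ Nat.log 2 m := by omega
      have hrm : m - 2 ^ Nat.log 2 m < m := by omega
      rw [List.isChain_cons]
      refine ⟨?_, ih _ hrm⟩
      intro h hh
      rcases Nat.eq_zero_or_pos (m - 2 ^ Nat.log 2 m) with hr0 | hr0
      · rw [hr0, bitsD_zero] at hh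
        simp at hh
      · rw [bitsD_pos (by omega)] at hh
        simp only [List.head?_cons, Option.mem_some_iff] at hh
        subst hh
        exact Nat.log_lt_of_lt_pow (by omega) hrk

lemma bitsD_length : ∀ m, (bitsD m).length = wtt m := by
  intro m
  induction m using Nat.strong_induction_on with
  | _ m ih =>
    rcases Nat.eq_zero_or_pos m with h0 | h0
    · subst h0; rw [bitsD_zero, wtt_zero]; rfl
    · rw [bitsD_pos (by omega)]
      have hle := log2_le (m := m) (by omega)
      have hlt2 := log2_lt m
      have hpos : 0 < 2 ^ Nat.log 2 m := Nat.pow_pos (by norm_num)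
      have hpk : (2:ℕ) ^ (Nat.log 2 m + 1) = 2 ^ Nat.log 2 m + 2 ^ Nat.log 2 m := by ring
      have hrk : m - 2 ^ Nat.log 2 m < 2 ^ Nat.log 2 m := by omega
      have hrm : m - 2 ^ Nat.log 2 m < m := by omega
      have hm : m = 2 ^ Nat.log 2 m + (m - 2 ^ Nat.log 2 m) := by omega
      rw [List.length_cons, ih _ hrm]
      conv_rhs => rw [hm]
      rw [wtt_pow_add _ _ hrk]

variable {d : ℕ}

lemma ok_chain_fst {L : List (E d)} (h : Ok L) : List.IsChain (· > ·) (L.map Prod.fst) := by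
  unfold Ok at h
  rw [List.isChain_map]
  exact h.imp (fun {a b} hab => hab.1)

lemma plsum_map_fst (L : List (E d)) : plsum (L.map Prod.fst) = ms L := by
  unfold plsum ms
  rw [List.map_map]
  rfl

lemma map_fst_eq_bitsD {L : List (E d)} (h : Ok L) : L.map Prod.fst = bitsD (ms L) := by
  apply binU _ _ (ok_chain_fst h) (bitsD_chain _)
  rw [plsum_map_fst, bitsD_sum]

/-- Finset of valid lists with a given descending power list -/
def VL (dd : ℕ) : List ℕ → Finset (List (E dd))
  | [] => {([] : List (E dd))}
  | k :: ks => (VL dd ks).biUnion fun M =>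
      match M with
      | [] => Finset.univ.image fun c : Dir dd => [(k, c)]
      | f :: T => (Finset.univ.filter fun c : Dir dd => f.2 ≠ rv c).image
          fun c => (k, c) :: f :: T

lemma VL_sound : ∀ ks : List ℕ, List.IsChain (· > ·) ks →
    ∀ L ∈ VL d ks, Ok L ∧ L.map Prod.fst = ks := by
  intro ks
  induction ks with
  | nil =>
    intro _ L hL
    have : L = [] := by simpa [VL] using hL
    subst this
    exact ⟨ok_nil, rfl⟩
  | cons k ks ih =>
    intro hc L hL
    rw [VL, Finset.mem_biUnion] at hL
    obtain ⟨M, hM, hLM⟩ := hL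
    obtain ⟨hMok, hMfst⟩ := ih hc.tail M hM
    rcases M with _ | ⟨f, T⟩
    · simp only [Finset.mem_image, Finset.mem_univ, true_and] at hLM
      obtain ⟨c, rfl⟩ := hLM
      have hks : ks = [] := by simpa using hMfst.symm
      subst hks
      exact ⟨ok_singleton _, by simp⟩
    · simp only [Finset.mem_image, Finset.mem_filter, Finset.mem_univ, true_and] at hLM
      obtain ⟨c, hcc, rfl⟩ := hLM
      have hf : f.1 < k := by
        have h1 : (f :: T).map Prod.fst = ks := hMfst
        have h2 : f.1 :: T.map Prod.fst = ks := by simpa using h1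
        have h3 := List.isChain_cons_cons.mp (h2 ▸ hc)
        exact h3.1
      refine ⟨ok_cons_cons.mpr ⟨⟨hf, hcc⟩, hMok⟩, ?_⟩
      simp [hMfst]

lemma VL_complete : ∀ L : List (E d), Ok L → L ∈ VL d (L.map Prod.fst) := by
  intro L
  induction L with
  | nil => intro _; simp [VL]
  | cons e M ih =>
    intro h
    rcases e with ⟨k, c⟩
    have hM : M ∈ VL d (M.map Prod.fst) := ih (ok_tail h)
    show ((k, c) :: M) ∈ VL d (k :: M.map Prod.fst)
    rw [VL, Finset.mem_biUnion]
    refine ⟨M, hM, ?_⟩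
    rcases M with _ | ⟨f, T⟩
    · simp
    · simp only [Finset.mem_image, Finset.mem_filter, Finset.mem_univ, true_and]
      exact ⟨c, (ok_cons_cons.mp h).1.2, rfl⟩

lemma card_dir (hd : 1 ≤ d) : Fintype.card (Dir d) = 2 * d := by
  simp [Fintype.card_prod]
  ring

lemma VL_step_card_nil (hd : 1 ≤ d) (k : ℕ) :
    ((Finset.univ : Finset (Dir d)).image fun c => [((k, c) : E d)]).card = 2 * d := by
  have hinj : Function.Injective (fun c : Dir d => [((k, c) : E d)]) := by
    intro a b hab
    simpa using hab
  rw [Finset.card_image_of_injective _ hinj, Finset.card_univ, card_dir hd]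

lemma VL_step_card_cons (hd : 1 ≤ d) (k : ℕ) (f : E d) (T : List (E d)) :
    (((Finset.univ : Finset (Dir d)).filter fun c => f.2 ≠ rv c).image
        fun c => (k, c) :: f :: T).card = 2 * d - 1 := by
  have hinj : Function.Injective (fun c : Dir d => (k, c) :: f :: T) := by
    intro a b hab
    simpa using hab
  rw [Finset.card_image_of_injective _ hinj]
  have hset : (Finset.univ : Finset (Dir d)).filter (fun c => f.2 ≠ rv c)
      = Finset.univ \ {rv f.2} := by
    ext c
    simp only [Finset.mem_filter, Finset.mem_univ, true_and, Finset.mem_sdiff,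
      Finset.mem_singleton]
    constructor
    · intro h hc2
      subst hc2
      exact h (by simp)
    · intro h hc2
      apply h
      rw [hc2]
      simp
  rw [hset, Finset.card_sdiff_of_subset (by simp), Finset.card_univ, card_dir hd]
  simp

lemma VL_card (hd : 1 ≤ d) : ∀ ks : List ℕ, ks ≠ [] → List.IsChain (· > ·) ks →
    (VL d ks).card = 2 * d * (2 * d - 1) ^ (ks.length - 1) := by
  intro ks
  induction ks with
  | nil => intro h; exact absurd rfl h
  | cons k ks ih =>
    intro _ hc
    have hdisj : ∀ M₁ ∈ VL d ks, ∀ M₂ ∈ VL d ks, M₁ ≠ M₂ →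
        Disjoint ((fun M => match M with
          | [] => Finset.univ.image fun c : Dir d => [(k, c)]
          | f :: T => (Finset.univ.filter fun c : Dir d => f.2 ≠ rv c).image
              fun c => (k, c) :: f :: T) M₁)
          ((fun M => match M with
          | [] => Finset.univ.image fun c : Dir d => [(k, c)]
          | f :: T => (Finset.univ.filter fun c : Dir d => f.2 ≠ rv c).image
              fun c => (k, c) :: f :: T) M₂) := by
      intro M₁ _ M₂ _ hne
      rw [Finset.disjoint_left]
      intro L hL1 hL2
      apply hne
      have h1 : L.tail = M₁ := by
        rcases M₁ with _ | ⟨f, T⟩ <;>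
          · simp only [Finset.mem_image, Finset.mem_filter, Finset.mem_univ, true_and] at hL1
            obtain ⟨c, hc1⟩ := hL1
            first
            | (rw [← hc1]; rfl)
            | (rw [← hc1.2]; rfl)
      have h2 : L.tail = M₂ := by
        rcases M₂ with _ | ⟨f, T⟩ <;>
          · simp only [Finset.mem_image, Finset.mem_filter, Finset.mem_univ, true_and] at hL2
            obtain ⟨c, hc2⟩ := hL2
            first
            | (rw [← hc2]; rfl)
            | (rw [← hc2.2]; rfl)
      rw [← h1, ← h2]
    rw [VL, Finset.card_biUnion hdisj]
    rcases ks with _ | ⟨k₂, ks₂⟩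
    · -- base: ks = []
      have hv : VL d ([] : List ℕ) = {([] : List (E d))} := rfl
      rw [hv, Finset.sum_singleton]
      have himg := VL_step_card_nil (d := d) hd k
      simpa using himg
    · -- inductive: every M is nonempty
      have hcard : ∀ M ∈ VL d (k₂ :: ks₂),
          ((fun M : List (E d) => match M with
            | [] => Finset.univ.image fun c : Dir d => [(k, c)]
            | f :: T => (Finset.univ.filter fun c : Dir d => f.2 ≠ rv c).image
                fun c => (k, c) :: f :: T) M).card = 2 * d - 1 := by
        intro M hM
        obtain ⟨hMok, hMfst⟩ := VL_sound _ hc.tail M hM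
        rcases M with _ | ⟨f, T⟩
        · exfalso; simpa using hMfst
        · exact VL_step_card_cons hd k f T
      rw [Finset.sum_congr rfl hcard]
      rw [Finset.sum_const, smul_eq_mul]
      rw [ih (by simp) hc.tail]
      have hlen : (k₂ :: ks₂).length - 1 + 1 = (k :: k₂ :: ks₂).length - 1 := by
        simp
      rw [← hlen]
      ring

end UW


namespace UW

variable {d : ℕ}

lemma wt_eq_wtt : wt = wtt := rfl

/-- the set of cells that are ON at time n -/
def OnSet (d n : ℕ) : Set (Fin d → ℤ) :=
  {p | ∃ L, Ok L ∧ (∀ i, pt L i = p i) ∧ ms L < n}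

lemma OnSet_mono {m n : ℕ} (h : m ≤ n) : OnSet d m ⊆ OnSet d n := by
  rintro p ⟨L, h1, h2, h3⟩
  exact ⟨L, h1, h2, by omega⟩

lemma ms_pos {L : List (E d)} (h : L ≠ []) : 0 < ms L := by
  rcases L with _ | ⟨e, T⟩
  · exact absurd rfl h
  · rw [ms_cons]
    have : 0 < 2 ^ e.1 := Nat.pow_pos (by norm_num)
    omega

lemma isNbr_iff {p q : Fin d → ℤ} : isNbr d p q ↔ ∃ σ : Dir d, ∀ i, q i = p i + dz σ i := by
  constructor
  · rintro ⟨i, h | h⟩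
    · refine ⟨(i, true), fun j => ?_⟩
      rw [h, Function.update_apply]
      by_cases hj : j = i
      · subst hj; simp [dz]
      · simp [dz, hj]
    · refine ⟨(i, false), fun j => ?_⟩
      rw [h, Function.update_apply]
      by_cases hj : j = i
      · subst hj; simp [dz]; ring
      · simp [dz, hj]
  · rintro ⟨⟨i, b⟩, h⟩
    refine ⟨i, ?_⟩
    cases b
    · right
      funext j
      rw [h j, Function.update_apply]
      by_cases hj : j = i
      · subst hj; simp [dz]; ring
      · simp [dz, hj]
    · left
      funext j
      rw [h j, Function.update_apply]
      by_cases hj : j = i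
      · subst hj; simp [dz]
      · simp [dz, hj]

/-- descending-world parent -/
lemma parentD {L : List (E d)} (hL : Ok L) (hne : L ≠ []) :
    ∃ e, L.getLast? = some e ∧
      ∃ N, Ok N ∧ (∀ i, pt N i = pt L i - dz e.2 i) ∧ ms N + 1 = ms L := by
  have hA : OkA L.reverse := ok_iff_okA_reverse.mp hL
  rcases hrev : L.reverse with _ | ⟨⟨k, c⟩, T⟩
  · exact absurd (by simpa using congrArg List.reverse hrev) hne
  · rw [hrev] at hA
    refine ⟨(k, c), ?_, (run 0 k c ++ T).reverse, ?_, ?_, ?_⟩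
    · have h1 := List.getLast?_reverse (l := L.reverse)
      rw [List.reverse_reverse] at h1
      rw [h1, hrev]
      rfl
    · rw [ok_iff_okA_reverse, List.reverse_reverse]
      exact parent_ok hA
    · intro i
      rw [pt_reverse]
      have h2 : pt L i = pt L.reverse i := (pt_reverse L i).symm
      rw [h2, hrev]
      exact parent_pt i
    · rw [ms_reverse]
      have h2 : ms L = ms L.reverse := (ms_reverse L).symm
      rw [h2, hrev]
      exact parent_ms

/-- descending-world ADD -/
lemma ADD_D {M : List (E d)} (σ : Dir d) (hM : Ok M) :
    (∃ N, Ok N ∧ ∀ i, pt N i = pt M i + dz σ i)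
    ∨ (∃ τ N₂, τ.1 ≠ σ.1 ∧ Ok N₂ ∧ (∀ i, pt N₂ i = pt M i + dz σ i - dz τ i)
        ∧ ms N₂ ≤ ms M) := by
  have hA : OkA M.reverse := ok_iff_okA_reverse.mp hM
  rcases ADD σ hA with ⟨N, hN, hpt⟩ | ⟨τ, N₂, hτ, hN₂, hpt, hms⟩
  · left
    refine ⟨N.reverse, okA_iff_ok_reverse.mp hN, fun i => ?_⟩
    rw [pt_reverse, hpt i, pt_reverse]
  · right
    refine ⟨τ, N₂.reverse, hτ, okA_iff_ok_reverse.mp hN₂, fun i => ?_, ?_⟩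
    · rw [pt_reverse, hpt i, pt_reverse]
    · rw [ms_reverse]
      rw [ms_reverse] at hms
      exact hms

/-- the key local equivalence -/
theorem crux {n : ℕ} (hn : 1 ≤ n) (p : Fin d → ℤ) :
    p ∈ OnSet d (n + 1) ↔
      p ∈ OnSet d n ∨ (p ∉ OnSet d n ∧ ∃! q, isNbr d p q ∧ q ∈ OnSet d n) := by
  constructor
  · rintro ⟨L, hLok, hLpt, hLms⟩
    by_cases hm : p ∈ OnSet d n
    · exact Or.inl hm
    · right
      refine ⟨hm, ?_⟩
      have hms : ms L = n := by
        rcases Nat.lt_or_ge (ms L) n with h | h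
        · exact absurd ⟨L, hLok, hLpt, h⟩ hm
        · omega
      have hne : L ≠ [] := by
        intro h
        subst h
        simp [ms] at hms
        omega
      obtain ⟨e, hLast, N, hNok, hNpt, hNms⟩ := parentD hLok hne
      refine ⟨fun i => p i - dz e.2 i, ⟨?_, ⟨N, hNok, fun i => by rw [hNpt i, hLpt i], by omega⟩⟩, ?_⟩
      · apply isNbr_iff.mpr
        exact ⟨rv e.2, fun i => by rw [dz_rv]; ring⟩
      · rintro q ⟨hqnbr, ⟨M, hMok, hMpt, hMms⟩⟩
        obtain ⟨σ, hσ⟩ := isNbr_iff.mp hqnbr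
        have hpt2 : ∀ i, pt M i = pt L i - dz (rv σ) i := fun i => by
          rw [hMpt i, hσ i, dz_rv, hLpt i]; ring
        have hmm : ms M < ms L := by omega
        obtain ⟨e', he', hqe, _⟩ := P2 hLok hMok hne hpt2 hmm
        have hee : e' = e := by
          rw [hLast] at he'
          injection he' with h
          exact h.symm
        subst hee
        funext i
        rw [← hMpt i, hqe i, hLpt i]
  · rintro (h | ⟨hnot, q, ⟨hqn, hqmem⟩, huniq⟩)
    · exact OnSet_mono (by omega) h
    · by_contra hp
      by_cases hrep : ∃ L, Ok L ∧ ∀ i, pt L i = p i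
      · obtain ⟨L, hLok, hLpt⟩ := hrep
        have h1 : ¬ ms L < n + 1 := fun h => hp ⟨L, hLok, hLpt, h⟩
        obtain ⟨M, hMok, hMpt, hMms⟩ := hqmem
        obtain ⟨σ, hσ⟩ := isNbr_iff.mp hqn
        have hne : L ≠ [] := by
          intro h
          subst h
          apply h1
          show ms ([] : List (E d)) < n + 1
          rw [ms_nil]
          omega
        have hpt2 : ∀ i, pt M i = pt L i - dz (rv σ) i := fun i => by
          rw [hMpt i, hσ i, dz_rv, hLpt i]; ring
        have hmm : ms M < ms L := by omega
        obtain ⟨e, _, _, hms⟩ := P2 hLok hMok hne hpt2 hmm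
        omega
      · obtain ⟨M, hMok, hMpt, hMms⟩ := hqmem
        obtain ⟨σ, hσ⟩ := isNbr_iff.mp hqn
        rcases ADD_D (rv σ) hMok with ⟨N, hN, hNpt⟩ | ⟨τ, N₂, hτ, hN₂, hNpt, hNms⟩
        · refine hrep ⟨N, hN, fun i => ?_⟩
          rw [hNpt i, hMpt i, hσ i, dz_rv]
          ring
        · have hq₂mem : (fun i => p i - dz τ i) ∈ OnSet d n := by
            refine ⟨N₂, hN₂, fun i => ?_, by omega⟩
            rw [hNpt i, hMpt i, hσ i, dz_rv]
            ring
          have hq₂nbr : isNbr d p (fun i => p i - dz τ i) := by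
            apply isNbr_iff.mpr
            exact ⟨rv τ, fun i => by rw [dz_rv]; ring⟩
          have h1 : (fun i => p i - dz τ i) = q := huniq _ ⟨hq₂nbr, hq₂mem⟩
          have hdz : ∀ i, dz τ i = dz (rv σ) i := by
            intro i
            have h2 := congrFun h1 i
            try simp only at h2
            rw [hσ i] at h2
            rw [dz_rv]
            linarith
          have hτσ : τ = rv σ := dz_inj hdz
          exact hτ (by rw [hτσ])

lemma OnSet_one {p : Fin d → ℤ} : p ∈ OnSet d 1 ↔ p = fun _ => (0:ℤ) := by
  constructor
  · rintro ⟨L, hok, hpt, hms⟩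
    have hL : L = [] := by
      by_contra h
      have := ms_pos h
      omega
    subst hL
    funext i
    rw [← hpt i]
    simp
  · rintro rfl
    exact ⟨[], ok_nil, by simp, by simp [ms]⟩

end UW

/-- **(EqUWd).** For the `d`-dimensional Ulam-Warburton cellular automaton on
`ℤ^d` (`d ≥ 1`), the number `u n` of cells turned ON at stage `n` satisfies
`u 0 = 0`, `u 1 = 1`, and, for every `n ≥ 2`,
`u n = 2d (2d - 1)^(wt (n-1) - 1)`. -/
theorem ulam_warburton_dim_d
    (d : ℕ) (hd : 1 ≤ d)
    (S : ℕ → Finset (Fin d → ℤ))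
    (hS0 : S 0 = ∅)
    (hS1 : S 1 = {fun _ => (0 : ℤ)})
    (hstep : ∀ n, 1 ≤ n → ∀ p : Fin d → ℤ,
      p ∈ S (n + 1) ↔ p ∈ S n ∨ (p ∉ S n ∧ ∃! q, isNbr d p q ∧ q ∈ S n))
    (u : ℕ → ℕ)
    (hu0 : u 0 = 0)
    (hu : ∀ n, 1 ≤ n → u n = (S n).card - (S (n - 1)).card) :
    u 0 = 0 ∧ u 1 = 1 ∧
      ∀ n, 2 ≤ n → u n = 2 * d * (2 * d - 1) ^ (wt (n - 1) - 1) := by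

  have hSeq : ∀ n, 1 ≤ n → ∀ p : Fin d → ℤ, p ∈ S n ↔ p ∈ UW.OnSet d n := by
    intro n hn
    induction n, hn using Nat.le_induction with
    | base =>
      intro p
      rw [hS1, Finset.mem_singleton, UW.OnSet_one]
    | succ n hn ih =>
      intro p
      rw [hstep n hn p, UW.crux hn p]
      simp only [ih]
  refine ⟨hu0, ?_, ?_⟩
  · rw [hu 1 le_rfl, hS1, hS0]
    simp
  · intro n hn2
    obtain ⟨m, rfl⟩ : ∃ m, n = m + 1 := ⟨n - 1, by omega⟩
    have hm1 : 1 ≤ m := by omega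
    have hsub : S m ⊆ S (m + 1) := by
      intro p hp
      rw [hstep m hm1 p]
      exact Or.inl hp
    have hm' : m + 1 - 1 = m := by omega
    have hucard : u (m + 1) = (S (m + 1) \ S m).card := by
      rw [hu (m + 1) (by omega), hm', Finset.card_sdiff_of_subset hsub]
    have hBorn : S (m + 1) \ S m = (UW.VL d (UW.bitsD m)).image (fun L => UW.pt L) := by
      ext p
      rw [Finset.mem_sdiff, Finset.mem_image]
      rw [hSeq (m + 1) (by omega) p, hSeq m hm1 p]
      constructor
      · rintro ⟨⟨L, hok, hpt, hms⟩, hnot⟩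
        have hmsm : UW.ms L = m := by
          rcases Nat.lt_or_ge (UW.ms L) m with h | h
          · exact absurd ⟨L, hok, hpt, h⟩ hnot
          · omega
        refine ⟨L, ?_, funext hpt⟩
        have h1 : L.map Prod.fst = UW.bitsD m := by
          have h2 := UW.map_fst_eq_bitsD hok
          rw [hmsm] at h2
          exact h2
        have h2 := UW.VL_complete L hok
        rw [h1] at h2
        exact h2
      · rintro ⟨L, hL, rfl⟩
        obtain ⟨hok, hfst⟩ := UW.VL_sound _ (UW.bitsD_chain m) L hL
        have hmsm : UW.ms L = m := by
          have h1 : UW.plsum (L.map Prod.fst) = UW.ms L := UW.plsum_map_fst L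
          rw [hfst, UW.bitsD_sum] at h1
          omega
        constructor
        · exact ⟨L, hok, fun i => rfl, by omega⟩
        · rintro ⟨L', hok', hpt', hms'⟩
          have hLL : L' = L := UW.pt_inj hok' hok (funext hpt')
          subst hLL
          omega
    have hinj : Set.InjOn (fun L => UW.pt L) ((UW.VL d (UW.bitsD m) : Finset (List (UW.E d))) : Set (List (UW.E d))) := by
      intro L hL L2 hL2 hpt
      exact UW.pt_inj (UW.VL_sound _ (UW.bitsD_chain m) L hL).1
        (UW.VL_sound _ (UW.bitsD_chain m) L2 hL2).1 hpt
    have hne : UW.bitsD m ≠ [] := by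
      rw [UW.bitsD_pos (by omega)]
      simp
    rw [hucard, hBorn, Finset.card_image_of_injOn hinj,
      UW.VL_card hd _ hne (UW.bitsD_chain m), UW.bitsD_length, hm']
    rfl
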